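/- L is a conservative extension of classical propositional logic: a propositional (□-free) formula φ is a theorem of L if and only if it is a classical tautology. -/

import Mathlib

/-- Formulas over variables ℕ with ⊥, →, ∨, ∧ and □. -/
inductive Fm : Type where
  | var : ℕ → Fm
  | bot : Fm
  | imp : Fm → Fm → Fm
  | or  : Fm → Fm → Fm
  | and : Fm → Fm → Fm
  | box : Fm → Fm
deriving DecidableEq

namespace Fm

def neg (φ : Fm) : Fm := imp φ bot
def top : Fm := neg bot
/-- Material biconditional φ ↔ ψ. -/
def biimp (φ ψ : Fm) : Fm := and (imp φ ψ) (imp ψ φ)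
/-- Strict equivalence φ ≡ ψ := □(φ→ψ) ∧ □(ψ→φ). -/
def eqv (φ ψ : Fm) : Fm := and (box (imp φ ψ)) (box (imp ψ φ))

/-- Simultaneous substitution. -/
def substAll (σ : ℕ → Fm) : Fm → Fm
  | var n => σ n
  | bot => bot
  | imp a b => imp (substAll σ a) (substAll σ b)
  | or a b => or (substAll σ a) (substAll σ b)
  | and a b => and (substAll σ a) (substAll σ b)
  | box a => box (substAll σ a)

/-- Substitution of ρ for the variable x. -/
def subst (x : ℕ) (ρ : Fm) (χ : Fm) : Fm :=
  substAll (fun n => if n = x then ρ else var n) χ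

/-- Formulas without the modal operator (propositional formulas). -/
def BoxFree : Fm → Prop
  | var _ => True
  | bot => True
  | imp a b => BoxFree a ∧ BoxFree b
  | or a b => BoxFree a ∧ BoxFree b
  | and a b => BoxFree a ∧ BoxFree b
  | box _ => False

end Fm

/-- Hilbert-style intuitionistic propositional calculus. -/
inductive IPC : Set Fm → Fm → Prop where
  | hyp {Φ φ} : φ ∈ Φ → IPC Φ φ
  | a1 {Φ} (φ ψ) : IPC Φ (.imp φ (.imp ψ φ))
  | a2 {Φ} (φ ψ χ) :
      IPC Φ (.imp (.imp φ (.imp ψ χ)) (.imp (.imp φ ψ) (.imp φ χ)))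
  | a3 {Φ} (φ ψ) : IPC Φ (.imp φ (.imp ψ (.and φ ψ)))
  | a4 {Φ} (φ ψ) : IPC Φ (.imp (.and φ ψ) φ)
  | a5 {Φ} (φ ψ) : IPC Φ (.imp (.and φ ψ) ψ)
  | a6 {Φ} (φ ψ) : IPC Φ (.imp φ (.or φ ψ))
  | a7 {Φ} (φ ψ) : IPC Φ (.imp ψ (.or φ ψ))
  | a8 {Φ} (φ ψ χ) :
      IPC Φ (.imp (.imp φ χ) (.imp (.imp ψ χ) (.imp (.or φ ψ) χ)))
  | a9 {Φ} (φ) : IPC Φ (.imp .bot φ)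
  | mp {Φ φ ψ} : IPC Φ (.imp φ ψ) → IPC Φ φ → IPC Φ ψ

/-- An intuitionistic propositional tautology or a substitution-instance thereof. -/
def IsIntAx (φ : Fm) : Prop :=
  ∃ (φ₀ : Fm) (σ : ℕ → Fm), φ₀.BoxFree ∧ IPC ∅ φ₀ ∧ φ = φ₀.substAll σ

/-- Axioms (i)-(iv) of the logic L. -/
inductive LAx : Fm → Prop where
  | i {φ} : IsIntAx φ → LAx φ
  | ii (φ) : LAx (.imp (.box φ) φ)
  | iii (φ ψ χ) :
      LAx (.imp (.box (.imp φ ψ)) (.imp (.box (.imp ψ χ)) (.box (.imp φ χ))))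
  | iv (φ ψ) : LAx (.imp (.box (.or φ ψ)) (.or (.box φ) (.box ψ)))

/-- Derivability in the modal logic L: axioms (i)-(iv), rules MP and Axiom
Necessitation, plus theorem schemes tertium non datur and SP. -/
inductive L : Set Fm → Fm → Prop where
  | hyp {Φ φ} : φ ∈ Φ → L Φ φ
  | ax {Φ φ} : LAx φ → L Φ φ
  | an {Φ φ} : LAx φ → L Φ (.box φ)
  | tnd {Φ} (φ) : L Φ (.or φ (Fm.neg φ))
  | sp {Φ} (φ ψ χ : Fm) (x : ℕ) :
      L Φ (.imp (Fm.eqv φ ψ) (Fm.eqv (χ.subst x φ) (χ.subst x ψ)))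
  | mp {Φ φ ψ} : L Φ (.imp φ ψ) → L Φ φ → L Φ ψ

/-- Classical truth-value evaluation of formulas (□ is ignored; it is only
used on □-free formulas). -/
def Fm.evalc (v : ℕ → Prop) : Fm → Prop
  | .var n => v n
  | .bot => False
  | .imp a b => a.evalc v → b.evalc v
  | .or a b => a.evalc v ∨ b.evalc v
  | .and a b => a.evalc v ∧ b.evalc v
  | .box a => a.evalc v

namespace Aux

open Fm

/-! ### Boolean evaluation and variables -/

def evalb (v : ℕ → Bool) : Fm → Bool
  | .var n => v n
  | .bot => false
  | .imp a b => !(evalb v a) || evalb v b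
  | .or a b => evalb v a || evalb v b
  | .and a b => evalb v a && evalb v b
  | .box a => evalb v a

def varsOf : Fm → List ℕ
  | .var n => [n]
  | .bot => []
  | .imp a b => varsOf a ++ varsOf b
  | .or a b => varsOf a ++ varsOf b
  | .and a b => varsOf a ++ varsOf b
  | .box a => varsOf a

theorem evalb_iff (v : ℕ → Bool) : ∀ φ : Fm, (evalb v φ = true) ↔ φ.evalc (fun n => v n = true) := by
  intro φ
  induction φ with
  | var n => simp [evalb, Fm.evalc]
  | bot => simp [evalb, Fm.evalc]
  | imp a b iha ihb =>
    rcases Bool.eq_false_or_eq_true (evalb v a) with h | h <;>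
      simp [evalb, Fm.evalc, ← iha, ← ihb, h]
  | or a b iha ihb => simp [evalb, Fm.evalc, ← iha, ← ihb]
  | and a b iha ihb => simp [evalb, Fm.evalc, ← iha, ← ihb]
  | box a iha => simpa [evalb, Fm.evalc] using iha

/-! ### Basic IPC lemmas -/

theorem ipcWeaken {Φ Ψ : Set Fm} {φ : Fm} (h : IPC Φ φ) (hs : Φ ⊆ Ψ) : IPC Ψ φ := by
  induction h with
  | hyp h => exact .hyp (hs h)
  | mp _ _ ih1 ih2 => exact .mp ih1 ih2
  | a1 φ ψ => exact .a1 φ ψ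
  | a2 φ ψ χ => exact .a2 φ ψ χ
  | a3 φ ψ => exact .a3 φ ψ
  | a4 φ ψ => exact .a4 φ ψ
  | a5 φ ψ => exact .a5 φ ψ
  | a6 φ ψ => exact .a6 φ ψ
  | a7 φ ψ => exact .a7 φ ψ
  | a8 φ ψ χ => exact .a8 φ ψ χ
  | a9 φ => exact .a9 φ

theorem ipcId (Φ : Set Fm) (φ : Fm) : IPC Φ (φ.imp φ) :=
  .mp (.mp (.a2 φ (φ.imp φ) φ) (.a1 φ (φ.imp φ))) (.a1 φ φ)

theorem ipcDed' {Φ' : Set Fm} {φ : Fm} (h : IPC Φ' φ) :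
    ∀ {Φ : Set Fm} {ψ : Fm}, Φ' = insert ψ Φ → IPC Φ (ψ.imp φ) := by
  induction h with
  | hyp h =>
    intro Φ ψ he; subst he
    rcases Set.mem_insert_iff.1 h with rfl | h
    · exact ipcId Φ _
    · exact .mp (.a1 _ _) (.hyp h)
  | mp _ _ ih1 ih2 =>
    intro Φ ψ he
    exact .mp (.mp (.a2 _ _ _) (ih1 he)) (ih2 he)
  | a1 φ ψ => exact fun _ => .mp (.a1 _ _) (.a1 φ ψ)
  | a2 φ ψ χ => exact fun _ => .mp (.a1 _ _) (.a2 φ ψ χ)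
  | a3 φ ψ => exact fun _ => .mp (.a1 _ _) (.a3 φ ψ)
  | a4 φ ψ => exact fun _ => .mp (.a1 _ _) (.a4 φ ψ)
  | a5 φ ψ => exact fun _ => .mp (.a1 _ _) (.a5 φ ψ)
  | a6 φ ψ => exact fun _ => .mp (.a1 _ _) (.a6 φ ψ)
  | a7 φ ψ => exact fun _ => .mp (.a1 _ _) (.a7 φ ψ)
  | a8 φ ψ χ => exact fun _ => .mp (.a1 _ _) (.a8 φ ψ χ)
  | a9 φ => exact fun _ => .mp (.a1 _ _) (.a9 φ)

theorem ipcDed {Φ : Set Fm} {ψ φ : Fm} (h : IPC (insert ψ Φ) φ) : IPC Φ (ψ.imp φ) :=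
  ipcDed' h rfl

/-! ### Kalmár's lemma -/

def sgn (v : ℕ → Bool) (φ : Fm) : Fm := if evalb v φ = true then φ else φ.neg

def Hyps (v : ℕ → Bool) (l : List ℕ) : Set Fm := { f | ∃ n ∈ l, f = sgn v (.var n) }

theorem kalmar : ∀ (φ : Fm), φ.BoxFree → ∀ (v : ℕ → Bool) (l : List ℕ),
    (∀ n ∈ varsOf φ, n ∈ l) → IPC (Hyps v l) (sgn v φ) := by
  intro φ
  induction φ with
  | var n =>
    intro _ v l hl
    exact .hyp ⟨n, hl n (by simp [varsOf]), rfl⟩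
  | bot =>
    intro _ v l _
    show IPC _ (sgn v .bot)
    simp only [sgn, evalb]
    exact ipcId _ _
  | imp a b iha ihb =>
    intro hb v l hl
    have ha' := iha hb.1 v l (fun n hn => hl n (by simp [varsOf, hn]))
    have hb' := ihb hb.2 v l (fun n hn => hl n (by simp [varsOf, hn]))
    cases hea : evalb v a <;> cases heb : evalb v b <;>
      simp [sgn, evalb, hea, heb] at ha' hb' ⊢
    · -- a false, b false : ⊢ a.imp b from ¬a
      apply ipcDed
      exact .mp (.a9 b) (.mp (ipcWeaken (ha' : IPC _ (a.imp .bot)) (Set.subset_insert _ _)) (.hyp (Set.mem_insert _ _)))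
    · -- a false, b true
      apply ipcDed
      exact .mp (.a9 b) (.mp (ipcWeaken (ha' : IPC _ (a.imp .bot)) (Set.subset_insert _ _)) (.hyp (Set.mem_insert _ _)))
    · -- a true, b false : ⊢ ¬(a.imp b)
      apply ipcDed
      exact .mp (ipcWeaken (hb' : IPC _ (b.imp .bot)) (Set.subset_insert _ _))
        (.mp (.hyp (Set.mem_insert _ _)) (ipcWeaken ha' (Set.subset_insert _ _)))
    · exact .mp (.a1 b a) hb'
  | or a b iha ihb =>
    intro hb v l hl
    have ha' := iha hb.1 v l (fun n hn => hl n (by simp [varsOf, hn]))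
    have hb' := ihb hb.2 v l (fun n hn => hl n (by simp [varsOf, hn]))
    cases hea : evalb v a <;> cases heb : evalb v b <;>
      simp [sgn, evalb, hea, heb] at ha' hb' ⊢
    · exact .mp (.mp (.a8 a b .bot) ha') hb'
    · exact .mp (.a7 a b) hb'
    · exact .mp (.a6 a b) ha'
    · exact .mp (.a6 a b) ha'
  | and a b iha ihb =>
    intro hb v l hl
    have ha' := iha hb.1 v l (fun n hn => hl n (by simp [varsOf, hn]))
    have hb' := ihb hb.2 v l (fun n hn => hl n (by simp [varsOf, hn]))
    cases hea : evalb v a <;> cases heb : evalb v b <;>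
      simp [sgn, evalb, hea, heb] at ha' hb' ⊢
    · apply ipcDed
      exact .mp (ipcWeaken ha' (Set.subset_insert _ _)) (.mp (.a4 a b) (.hyp (Set.mem_insert _ _)))
    · apply ipcDed
      exact .mp (ipcWeaken ha' (Set.subset_insert _ _)) (.mp (.a4 a b) (.hyp (Set.mem_insert _ _)))
    · apply ipcDed
      exact .mp (ipcWeaken hb' (Set.subset_insert _ _)) (.mp (.a5 a b) (.hyp (Set.mem_insert _ _)))
    · exact .mp (.mp (.a3 a b) ha') hb'
  | box a _ =>
    intro hb
    exact absurd hb (by simp [Fm.BoxFree])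

/-! ### Excluded middle hypotheses and variable elimination -/

def EMset : Set Fm := { f | ∃ ψ : Fm, f = ψ.or ψ.neg }

theorem elimVars (φ : Fm) : ∀ l : List ℕ,
    (∀ v : ℕ → Bool, IPC (EMset ∪ Hyps v l) φ) → IPC EMset φ := by
  intro l
  induction l with
  | nil =>
    intro h
    refine ipcWeaken (h (fun _ => false)) ?_
    rintro f (hf | ⟨n, hn, _⟩)
    · exact hf
    · exact absurd hn List.not_mem_nil
  | cons x l ih =>
    intro h
    apply ih
    intro v
    have h1 := h (fun n => if n = x then true else v n)
    have h0 := h (fun n => if n = x then false else v n)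
    have w1 : IPC (insert (Fm.var x) (EMset ∪ Hyps v l)) φ := by
      refine ipcWeaken h1 ?_
      rintro f (hf | ⟨n, hn, rfl⟩)
      · exact Set.mem_insert_iff.2 (Or.inr (Or.inl hf))
      · by_cases hx : n = x
        · subst hx
          simp [sgn, evalb]
        · rcases List.mem_cons.1 hn with rfl | hn
          · exact absurd rfl hx
          · refine Set.mem_insert_iff.2 (Or.inr (Or.inr ⟨n, hn, ?_⟩))
            simp [sgn, evalb, hx]
            rfl
    have w0 : IPC (insert ((Fm.var x).neg) (EMset ∪ Hyps v l)) φ := by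
      refine ipcWeaken h0 ?_
      rintro f (hf | ⟨n, hn, rfl⟩)
      · exact Set.mem_insert_iff.2 (Or.inr (Or.inl hf))
      · by_cases hx : n = x
        · subst hx
          simp [sgn, evalb]
        · rcases List.mem_cons.1 hn with rfl | hn
          · exact absurd rfl hx
          · refine Set.mem_insert_iff.2 (Or.inr (Or.inr ⟨n, hn, ?_⟩))
            simp [sgn, evalb, hx]
            rfl
    exact .mp (.mp (.mp (.a8 (.var x) ((Fm.var x).neg) φ) (ipcDed w1)) (ipcDed w0))
      (.hyp (Or.inl ⟨Fm.var x, rfl⟩))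

/-! ### Transfer from IPC (+ EM) to L -/

theorem substAll_var : ∀ φ : Fm, Fm.substAll Fm.var φ = φ := by
  intro φ
  induction φ <;> simp [Fm.substAll, *]

theorem isIntAx_of_boxFree_thm {φ : Fm} (hb : φ.BoxFree) (h : IPC ∅ φ) : IsIntAx φ :=
  ⟨φ, Fm.var, hb, h, (substAll_var φ).symm⟩

theorem L_of_IPC {Φ : Set Fm} {φ : Fm} (h : IPC Φ φ) (hΦ : ∀ ψ ∈ Φ, L ∅ ψ) : L ∅ φ := by
  induction h with
  | hyp h => exact hΦ _ h
  | mp _ _ ih1 ih2 => exact .mp ih1 ih2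
  | a1 φ ψ =>
    exact .ax (.i ⟨.imp (.var 0) (.imp (.var 1) (.var 0)),
      (fun n => if n = 0 then φ else ψ), by simp [Fm.BoxFree], .a1 _ _, by simp [Fm.substAll]⟩)
  | a2 φ ψ χ =>
    exact .ax (.i ⟨.imp (.imp (.var 0) (.imp (.var 1) (.var 2))) (.imp (.imp (.var 0) (.var 1)) (.imp (.var 0) (.var 2))),
      (fun n => if n = 0 then φ else if n = 1 then ψ else χ), by simp [Fm.BoxFree], .a2 _ _ _, by simp [Fm.substAll]⟩)
  | a3 φ ψ =>
    exact .ax (.i ⟨.imp (.var 0) (.imp (.var 1) (.and (.var 0) (.var 1))),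
      (fun n => if n = 0 then φ else ψ), by simp [Fm.BoxFree], .a3 _ _, by simp [Fm.substAll]⟩)
  | a4 φ ψ =>
    exact .ax (.i ⟨.imp (.and (.var 0) (.var 1)) (.var 0),
      (fun n => if n = 0 then φ else ψ), by simp [Fm.BoxFree], .a4 _ _, by simp [Fm.substAll]⟩)
  | a5 φ ψ =>
    exact .ax (.i ⟨.imp (.and (.var 0) (.var 1)) (.var 1),
      (fun n => if n = 0 then φ else ψ), by simp [Fm.BoxFree], .a5 _ _, by simp [Fm.substAll]⟩)
  | a6 φ ψ =>
    exact .ax (.i ⟨.imp (.var 0) (.or (.var 0) (.var 1)),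
      (fun n => if n = 0 then φ else ψ), by simp [Fm.BoxFree], .a6 _ _, by simp [Fm.substAll]⟩)
  | a7 φ ψ =>
    exact .ax (.i ⟨.imp (.var 1) (.or (.var 0) (.var 1)),
      (fun n => if n = 0 then φ else ψ), by simp [Fm.BoxFree], .a7 _ _, by simp [Fm.substAll]⟩)
  | a8 φ ψ χ =>
    exact .ax (.i ⟨.imp (.imp (.var 0) (.var 2)) (.imp (.imp (.var 1) (.var 2)) (.imp (.or (.var 0) (.var 1)) (.var 2))),
      (fun n => if n = 0 then φ else if n = 1 then ψ else χ), by simp [Fm.BoxFree], .a8 _ _ _, by simp [Fm.substAll]⟩)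
  | a9 φ =>
    exact .ax (.i ⟨.imp .bot (.var 0),
      (fun _ => φ), by simp [Fm.BoxFree], .a9 _, by simp [Fm.substAll]⟩)

/-! ### Soundness of L w.r.t. classical evaluation -/

theorem evalc_substAll (σ : ℕ → Fm) (v : ℕ → Prop) :
    ∀ φ : Fm, (Fm.substAll σ φ).evalc v = φ.evalc (fun n => (σ n).evalc v) := by
  intro φ
  induction φ <;> simp [Fm.substAll, Fm.evalc, *]

theorem substAll_comp (σ τ : ℕ → Fm) :
    ∀ φ : Fm, Fm.substAll σ (Fm.substAll τ φ) = Fm.substAll (fun n => Fm.substAll σ (τ n)) φ := by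
  intro φ
  induction φ <;> simp [Fm.substAll, *]

theorem ipcSound {Φ : Set Fm} {φ : Fm} (h : IPC Φ φ) (v : ℕ → Prop)
    (hv : ∀ ψ ∈ Φ, ψ.evalc v) : φ.evalc v := by
  induction h with
  | hyp h => exact hv _ h
  | mp _ _ ih1 ih2 => exact ih1 ih2
  | a1 φ ψ => exact fun a _ => a
  | a2 φ ψ χ => exact fun f g a => f a (g a)
  | a3 φ ψ => exact fun a b => ⟨a, b⟩
  | a4 φ ψ => exact fun h => h.1
  | a5 φ ψ => exact fun h => h.2
  | a6 φ ψ => exact fun a => Or.inl a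
  | a7 φ ψ => exact fun b => Or.inr b
  | a8 φ ψ χ => exact fun f g h => h.elim f g
  | a9 φ => exact fun h => h.elim

theorem not_IPC_var (n : ℕ) (h : IPC ∅ (Fm.var n)) : False :=
  ipcSound h (fun _ => False) (fun _ hψ => hψ.elim)

/-! ### Disjunction property of IPC via the Kleene slash -/

def Sl : Fm → Prop
  | .var n => IPC ∅ (.var n)
  | .bot => False
  | .imp a b => IPC ∅ (.imp a b) ∧ (Sl a → Sl b)
  | .or a b => Sl a ∨ Sl b
  | .and a b => Sl a ∧ Sl b
  | .box a => IPC ∅ (.box a)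

theorem sl_sound : ∀ φ : Fm, Sl φ → IPC ∅ φ := by
  intro φ
  induction φ with
  | var n => exact fun h => h
  | bot => exact fun h => h.elim
  | imp a b _ _ => exact fun h => h.1
  | or a b iha ihb => exact fun h => h.elim (fun s => .mp (.a6 a b) (iha s)) (fun s => .mp (.a7 a b) (ihb s))
  | and a b iha ihb => exact fun h => .mp (.mp (.a3 a b) (iha h.1)) (ihb h.2)
  | box a _ => exact fun h => h

theorem sl_ipc {φ : Fm} (h : IPC ∅ φ) : Sl φ := by
  induction h with
  | hyp h => exact absurd h (Set.notMem_empty _)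
  | mp _ _ ih1 ih2 => exact ih1.2 ih2
  | a1 φ ψ => exact ⟨.a1 φ ψ, fun sφ => ⟨.mp (.a1 _ _) (sl_sound φ sφ), fun _ => sφ⟩⟩
  | a2 φ ψ χ =>
    refine ⟨.a2 φ ψ χ, fun s1 => ⟨.mp (.a2 φ ψ χ) s1.1, fun s2 => ⟨?_, fun sφ => (s1.2 sφ).2 (s2.2 sφ)⟩⟩⟩
    exact .mp (.mp (.a2 φ ψ χ) s1.1) s2.1
  | a3 φ ψ => exact ⟨.a3 φ ψ, fun sφ => ⟨.mp (.a3 φ ψ) (sl_sound φ sφ), fun sψ => ⟨sφ, sψ⟩⟩⟩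
  | a4 φ ψ => exact ⟨.a4 φ ψ, fun s => s.1⟩
  | a5 φ ψ => exact ⟨.a5 φ ψ, fun s => s.2⟩
  | a6 φ ψ => exact ⟨.a6 φ ψ, fun s => Or.inl s⟩
  | a7 φ ψ => exact ⟨.a7 φ ψ, fun s => Or.inr s⟩
  | a8 φ ψ χ =>
    refine ⟨.a8 φ ψ χ, fun s1 => ⟨.mp (.a8 φ ψ χ) s1.1, fun s2 => ⟨?_, fun sor => sor.elim s1.2 s2.2⟩⟩⟩
    exact .mp (.mp (.a8 φ ψ χ) s1.1) s2.1
  | a9 φ => exact ⟨.a9 φ, fun f => f.elim⟩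

theorem ipc_dp {a b : Fm} (h : IPC ∅ (a.or b)) : IPC ∅ a ∨ IPC ∅ b :=
  (sl_ipc h).imp (sl_sound a) (sl_sound b)

/-! ### The closure A0 of the axioms and the semantics Ev -/

inductive A0 : Fm → Prop where
  | ax {φ} : LAx φ → A0 φ
  | trans {φ ψ χ} : A0 (.imp φ ψ) → A0 (.imp ψ χ) → A0 (.imp φ χ)
  | subst {φ} (σ : ℕ → Fm) : A0 φ → A0 (Fm.substAll σ φ)

def Ev : Fm → (ℕ → Prop) → Prop
  | .var n, v => v n
  | .bot, _ => False
  | .imp a b, v => Ev a v → Ev b v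
  | .or a b, v => Ev a v ∨ Ev b v
  | .and a b, v => Ev a v ∧ Ev b v
  | .box a, _ => A0 a ∧ ∀ w, Ev a w

theorem isIntAx_subst {φ : Fm} (h : IsIntAx φ) (σ : ℕ → Fm) : IsIntAx (Fm.substAll σ φ) := by
  obtain ⟨α, τ, hb, hp, rfl⟩ := h
  exact ⟨α, fun n => Fm.substAll σ (τ n), hb, hp, substAll_comp σ τ α⟩

theorem Ev_substAll_boxfree {α : Fm} (hb : α.BoxFree) (τ : ℕ → Fm) (w : ℕ → Prop) :
    Ev (Fm.substAll τ α) w ↔ α.evalc (fun n => Ev (τ n) w) := by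
  induction α with
  | var n => exact Iff.rfl
  | bot => exact Iff.rfl
  | imp a b iha ihb =>
    exact imp_congr (iha hb.1) (ihb hb.2)
  | or a b iha ihb => exact or_congr (iha hb.1) (ihb hb.2)
  | and a b iha ihb => exact and_congr (iha hb.1) (ihb hb.2)
  | box a _ => exact absurd hb (by simp [Fm.BoxFree])

theorem isIntAx_valid {φ : Fm} (h : IsIntAx φ) (w : ℕ → Prop) : Ev φ w := by
  obtain ⟨α, τ, hb, hp, rfl⟩ := h
  exact (Ev_substAll_boxfree hb τ w).2 (ipcSound hp _ (fun ψ h => h.elim))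

theorem not_A0_var : ∀ {θ : Fm}, A0 θ → ∀ n : ℕ, θ ≠ .var n := by
  intro θ h
  induction h with
  | ax h =>
    intro n hn
    cases h with
    | i hi =>
      obtain ⟨α, τ, hb, hp, rfl⟩ := hi
      cases α with
      | var m => exact not_IPC_var m hp
      | bot => exact Fm.noConfusion hn
      | imp a b => exact Fm.noConfusion hn
      | or a b => exact Fm.noConfusion hn
      | and a b => exact Fm.noConfusion hn
      | box a => exact Fm.noConfusion hn
    | ii φ => exact Fm.noConfusion hn
    | iii φ ψ χ => exact Fm.noConfusion hn
    | iv φ ψ => exact Fm.noConfusion hn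
  | trans _ _ _ _ => exact fun n hn => Fm.noConfusion hn
  | subst σ h ih =>
    intro n hn
    rename_i θ₀
    cases θ₀ with
    | var m => exact ih m rfl
    | bot => exact Fm.noConfusion hn
    | imp a b => exact Fm.noConfusion hn
    | or a b => exact Fm.noConfusion hn
    | and a b => exact Fm.noConfusion hn
    | box a => exact Fm.noConfusion hn

theorem A0_prime : ∀ {θ : Fm}, A0 θ → ∀ {φ ψ : Fm}, θ = .or φ ψ → IsIntAx φ ∨ IsIntAx ψ := by
  intro θ h
  induction h with
  | ax h =>
    intro φ ψ hn
    cases h with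
    | i hi =>
      obtain ⟨α, τ, hb, hp, rfl⟩ := hi
      cases α with
      | var m => exact absurd hp (fun h => not_IPC_var m h)
      | bot => exact Fm.noConfusion hn
      | imp a b => exact Fm.noConfusion hn
      | or a b =>
        injection hn with h1 h2
        rcases ipc_dp hp with hd | hd
        · exact Or.inl ⟨a, τ, hb.1, hd, h1.symm⟩
        · exact Or.inr ⟨b, τ, hb.2, hd, h2.symm⟩
      | and a b => exact Fm.noConfusion hn
      | box a => exact Fm.noConfusion hn
    | ii φ => exact Fm.noConfusion hn
    | iii φ ψ χ => exact Fm.noConfusion hn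
    | iv φ ψ => exact Fm.noConfusion hn
  | trans _ _ _ _ => exact fun hn => Fm.noConfusion hn
  | subst σ h ih =>
    intro φ ψ hn
    rename_i θ₀
    cases θ₀ with
    | var m => exact absurd rfl (not_A0_var h m)
    | bot => exact Fm.noConfusion hn
    | imp a b => exact Fm.noConfusion hn
    | or a b =>
      injection hn with h1 h2
      rcases ih rfl with hI | hI
      · exact Or.inl (h1 ▸ isIntAx_subst hI σ)
      · exact Or.inr (h2 ▸ isIntAx_subst hI σ)
    | and a b => exact Fm.noConfusion hn
    | box a => exact Fm.noConfusion hn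

/-- Every substitution instance of a member of A0 is Ev-valid. -/
theorem A0_val : ∀ {θ : Fm}, A0 θ → ∀ (σ : ℕ → Fm) (w : ℕ → Prop), Ev (Fm.substAll σ θ) w := by
  intro θ h
  induction h with
  | ax h =>
    cases h with
    | i hi => exact fun σ w => isIntAx_valid (isIntAx_subst hi σ) w
    | ii φ =>
      intro σ w
      exact fun h => h.2 w
    | iii φ ψ χ =>
      intro σ w
      rintro ⟨h1, h2⟩ ⟨h3, h4⟩
      exact ⟨A0.trans h1 h3, fun u ha => h4 u (h2 u ha)⟩
    | iv φ ψ =>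
      intro σ w
      rintro ⟨h1, _⟩
      rcases A0_prime h1 rfl with hI | hI
      · exact Or.inl ⟨A0.ax (.i hI), fun u => isIntAx_valid hI u⟩
      · exact Or.inr ⟨A0.ax (.i hI), fun u => isIntAx_valid hI u⟩
  | trans _ _ ih1 ih2 =>
    intro σ w
    exact fun ha => ih2 σ w (ih1 σ w ha)
  | subst τ h ih =>
    intro σ w
    rename_i θ₀
    have := ih (fun n => Fm.substAll σ (τ n)) w
    rw [substAll_comp]
    exact this

theorem A0_valid {θ : Fm} (h : A0 θ) (w : ℕ → Prop) : Ev θ w := by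
  have := A0_val h Fm.var w
  rwa [substAll_var] at this

theorem L_sound {Φ : Set Fm} {φ : Fm} (h : L Φ φ) (v : ℕ → Prop)
    (hv : ∀ ψ ∈ Φ, Ev ψ v) : Ev φ v := by
  induction h with
  | hyp h => exact hv _ h
  | ax h => exact A0_valid (A0.ax h) v
  | an h => exact ⟨A0.ax h, fun w => A0_valid (A0.ax h) w⟩
  | tnd φ => exact Classical.em (Ev φ v)
  | mp _ _ ih1 ih2 => exact ih1 ih2
  | sp a b c x =>
    intro h
    exact ⟨⟨A0.subst _ h.1.1, fun u => A0_val h.1.1 _ u⟩,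
           ⟨A0.subst _ h.2.1, fun u => A0_val h.2.1 _ u⟩⟩

theorem Ev_boxfree : ∀ {φ : Fm}, φ.BoxFree → ∀ v : ℕ → Prop, Ev φ v ↔ φ.evalc v := by
  intro φ
  induction φ with
  | var n => exact fun _ _ => Iff.rfl
  | bot => exact fun _ _ => Iff.rfl
  | imp a b iha ihb => exact fun hb v => imp_congr (iha hb.1 v) (ihb hb.2 v)
  | or a b iha ihb => exact fun hb v => or_congr (iha hb.1 v) (ihb hb.2 v)
  | and a b iha ihb => exact fun hb v => and_congr (iha hb.1 v) (ihb hb.2 v)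
  | box a _ => exact fun hb => absurd hb (by simp [Fm.BoxFree])

end Aux
/-- L is a conservative extension of CPC: a □-free formula is a theorem of L
iff it is a classical tautology. -/
theorem L_conservative_over_CPC {φ : Fm} (hφ : φ.BoxFree) :
    L ∅ φ ↔ ∀ v : ℕ → Prop, φ.evalc v := by
  constructor
  · intro h v
    exact (Aux.Ev_boxfree hφ v).1 (Aux.L_sound h v (fun ψ hψ => hψ.elim))
  · intro ht
    have hb : ∀ v : ℕ → Bool, Aux.evalb v φ = true := fun v =>
      (Aux.evalb_iff v φ).2 (ht _)
    have hk : ∀ v : ℕ → Bool, IPC (Aux.EMset ∪ Aux.Hyps v (Aux.varsOf φ)) φ := by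
      intro v
      have := Aux.kalmar φ hφ v (Aux.varsOf φ) (fun n hn => hn)
      rw [Aux.sgn, if_pos (hb v)] at this
      exact Aux.ipcWeaken this Set.subset_union_right
    have hEM : IPC Aux.EMset φ := Aux.elimVars φ (Aux.varsOf φ) hk
    exact Aux.L_of_IPC hEM (by rintro ψ ⟨χ, rfl⟩; exact L.tnd χ)
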